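/- Let ρ be a congruence on an inverse semigroup S, and define ρ_min by: a ρ_min b iff there exists an idempotent e with ae = be, a⁻¹a ρ e, and b⁻¹b ρ e. Then the canonical map ψ : S/ρ_min → S/ρ is idempotent separating, i.e., if two idempotents of S/ρ_min have the same image under ψ then they are equal. -/
import Mathlib


class InverseSemigroup (S : Type*) extends Semigroup S, Inv S where
  mul_inv_mul : ∀ a : S, a * a⁻¹ * a = a
  inv_mul_inv : ∀ a : S, a⁻¹ * a * a⁻¹ = a⁻¹
  idem_comm : ∀ e f : S, e * e = e → f * f = f → e * f = f * e

/-- `a ρ_min b` iff there is an idempotent `e` with `a*e = b*e`, `a⁻¹a ρ e` and `b⁻¹b ρ e`. -/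
def rhoMin {S : Type*} [InverseSemigroup S] (ρ : Con S) (a b : S) : Prop :=
  ∃ e : S, e * e = e ∧ a * e = b * e ∧ ρ (a⁻¹ * a) e ∧ ρ (b⁻¹ * b) e

section Aux

variable {S : Type*} [InverseSemigroup S]

/-- uniqueness of inverses in an inverse semigroup -/
lemma inv_unique' (s x : S) (h1 : s * x * s = s) (h2 : x * s * x = x) : x = s⁻¹ := by
  set y := s⁻¹ with hy
  have hy1 : s * y * s = s := InverseSemigroup.mul_inv_mul s
  have hy2 : y * s * y = y := InverseSemigroup.inv_mul_inv s
  have hxs : (x * s) * (x * s) = x * s := by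
    calc (x * s) * (x * s) = (x * s * x) * s := by simp [mul_assoc]
    _ = x * s := by rw [h2]
  have hys : (y * s) * (y * s) = y * s := by
    calc (y * s) * (y * s) = (y * s * y) * s := by simp [mul_assoc]
    _ = y * s := by rw [hy2]
  have hsx : (s * x) * (s * x) = s * x := by
    calc (s * x) * (s * x) = (s * x * s) * x := by simp [mul_assoc]
    _ = s * x := by rw [h1]
  have hsy : (s * y) * (s * y) = s * y := by
    calc (s * y) * (s * y) = (s * y * s) * y := by simp [mul_assoc]
    _ = s * y := by rw [hy1]
  have hx : x = y * s * x := by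
    calc x = x * s * x := h2.symm
    _ = x * (s * y * s) * x := by rw [hy1]
    _ = (x * s) * (y * s) * x := by simp [mul_assoc]
    _ = (y * s) * (x * s) * x := by rw [InverseSemigroup.idem_comm _ _ hxs hys]
    _ = y * ((s * x * s) * x) := by simp [mul_assoc]
    _ = y * (s * x) := by rw [h1]
    _ = y * s * x := by simp [mul_assoc]
  have hyy : y = y * s * x := by
    calc y = y * s * y := hy2.symm
    _ = y * (s * x * s) * y := by rw [h1]
    _ = y * ((s * x) * (s * y)) := by simp [mul_assoc]
    _ = y * ((s * y) * (s * x)) := by rw [InverseSemigroup.idem_comm _ _ hsx hsy]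
    _ = (y * s * y) * (s * x) := by simp [mul_assoc]
    _ = y * (s * x) := by rw [hy2]
    _ = y * s * x := by simp [mul_assoc]
  rw [hx, hy, ← hyy]

lemma idem_inv {e : S} (he : e * e = e) : e⁻¹ = e := by
  have : e = e⁻¹ := inv_unique' e e (by rw [he, he]) (by rw [he, he])
  exact this.symm

lemma rhoMin_sub {ρ : Con S} {a b : S} (h : rhoMin ρ a b) : ρ a b := by
  obtain ⟨e, _, hab, ha, hb⟩ := h
  have h1 : ρ (a * (a⁻¹ * a)) (a * e) := ρ.mul (ρ.refl a) ha
  have h2 : ρ (b * (b⁻¹ * b)) (b * e) := ρ.mul (ρ.refl b) hb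
  have ha' : a * (a⁻¹ * a) = a := by
    rw [← mul_assoc]; exact InverseSemigroup.mul_inv_mul a
  have hb' : b * (b⁻¹ * b) = b := by
    rw [← mul_assoc]; exact InverseSemigroup.mul_inv_mul b
  rw [ha'] at h1
  rw [hb'] at h2
  exact ρ.trans h1 (by rw [hab] at *; exact ρ.symm h2)

/-- Lallement: from `σ (a*a) a` get an idempotent `p` with `σ p a`. -/
lemma lallement {σ : Con S} {a : S} (ha : σ (a * a) a) :
    ∃ p : S, p * p = p ∧ σ p a := by
  set x := (a * a)⁻¹ with hx
  refine ⟨a * x * a, ?_, ?_⟩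
  · calc a * x * a * (a * x * a) = a * (x * (a * a) * x) * a := by simp [mul_assoc]
    _ = a * x * a := by rw [InverseSemigroup.inv_mul_inv (a * a)]
  · have h1 : σ (a * x * a) ((a * a) * x * (a * a)) :=
      σ.mul (σ.mul (σ.symm ha) (σ.refl x)) (σ.symm ha)
    have h2 : (a * a) * x * (a * a) = a * a := InverseSemigroup.mul_inv_mul (a * a)
    rw [h2] at h1
    exact σ.trans h1 ha

end Aux

/-- if `σ` is a congruence whose relation is `ρ_min`, then the canonical
map `ψ : S/σ → S/ρ` is idempotent separating: whenever the `σ`-classes of `a` and `b` are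
idempotents of `S/σ` (i.e. `σ (a*a) a` and `σ (b*b) b`) with the same image under `ψ`
(i.e. `ρ a b`), the classes are equal (i.e. `σ a b`). -/
theorem stmt1 {S : Type*} [InverseSemigroup S] (ρ σ : Con S)
    (hσ : ∀ a b : S, σ a b ↔ rhoMin ρ a b) :
    ∀ a b : S, σ (a * a) a → σ (b * b) b → ρ a b → σ a b := by
  intro a b ha hb hab
  obtain ⟨p, hp, hpa⟩ := lallement ha
  obtain ⟨q, hq, hqb⟩ := lallement hb
  -- σ ⊆ ρ
  have subρ : ∀ x y : S, σ x y → ρ x y := fun x y h => rhoMin_sub ((hσ x y).1 h)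
  have hρpq : ρ p q :=
    ρ.trans (subρ _ _ hpa) (ρ.trans hab (ρ.symm (subρ _ _ hqb)))
  -- idempotents p q with ρ p q are σ-related, witness p*q
  have hcomm : p * q = q * p := InverseSemigroup.idem_comm p q hp hq
  have hpq : σ p q := by
    rw [hσ]
    refine ⟨p * q, ?_, ?_, ?_, ?_⟩
    · calc p * q * (p * q) = p * (q * p) * q := by simp [mul_assoc]
      _ = (p * p) * (q * q) := by rw [← hcomm]; simp [mul_assoc]
      _ = p * q := by rw [hp, hq]
    · calc p * (p * q) = (p * p) * q := by rw [mul_assoc]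
      _ = p * q := by rw [hp]
      _ = p * (q * q) := by rw [hq]
      _ = (p * q) * q := by rw [mul_assoc]
      _ = (q * p) * q := by rw [hcomm]
      _ = q * (p * q) := by rw [mul_assoc]
    · rw [idem_inv hp]
      exact ρ.mul (ρ.refl p) hρpq
    · rw [idem_inv hq]
      exact ρ.mul (ρ.symm hρpq) (ρ.refl q)
  exact σ.trans (σ.symm hpa) (σ.trans hpq hqb)
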